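/- Let κ be a regular uncountable cardinal and α an ordinal. For β < α let rm_κ(β) denote the unique ordinal i < κ such that β = κ·γ + i for some ordinal γ. Let ℬ be a complete Boolean algebra containing a family of nonzero elements x_f, indexed by the finite partial functions f on α satisfying f(β) < rm_κ(β) for every β ∈ dom(f), such that: x_f ≤ x_g whenever g ⊆ f; x_f ⊓ x_g = 0 whenever f(β) ≠ g(β) for some β ∈ dom(f) ∩ dom(g); and the set of all x_f is dense in ℬ. Then ℬ satisfies the κ-c.c., and indeed the (κ,I,m)-c.c. for every ideal I on ℕ and every fast sequence m. -/

import Mathlib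

universe u v

/-- `mCirc m i = ∏_{j<i} m j` (so `mCirc m 0 = 1`). -/
def mCirc (m : ℕ → ℕ) (i : ℕ) : ℕ := ∏ j ∈ Finset.range i, m j

/-- A *fast sequence* is `m : ℕ → ℕ` with `m 0 ≥ 2` and
`m i ≥ ((m°(i))^(i^i))^(4·(m°(i))^(i^i))` for all `i`. -/
def FastSeq (m : ℕ → ℕ) : Prop :=
  2 ≤ m 0 ∧ ∀ i, (mCirc m i ^ i ^ i) ^ (4 * mCirc m i ^ i ^ i) ≤ m i

/-- An ideal on `ℕ`: contains all finite sets, closed under subsets and finite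
unions. -/
def IsIdealOnNat (I : Set (Set ℕ)) : Prop :=
  (∀ v : Set ℕ, v.Finite → v ∈ I) ∧ (∀ v ∈ I, ∀ w ⊆ v, w ∈ I) ∧
    (∀ v ∈ I, ∀ w ∈ I, v ∪ w ∈ I)

/-- A subset `S` of a complete Boolean algebra `B` is a complete subalgebra if it
contains `⊥` and is closed under complements, binary meets, and arbitrary suprema
(the latter computed in `B`; this is the meaning of `S ⋖ B`). -/
def IsCompleteSubalgebra {B : Type v} [CompleteBooleanAlgebra B] (S : Set B) : Prop :=
  ⊥ ∈ S ∧ (∀ a ∈ S, aᶜ ∈ S) ∧ (∀ a ∈ S, ∀ b ∈ S, a ⊓ b ∈ S) ∧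
    ∀ T ⊆ S, sSup T ∈ S

/-- The `κ`-c.c. for the (sub)algebra `S` of `B`: every antichain of nonzero
elements of `S` has cardinality `< κ`.  (Elements of `Set B` live in universe `v`,
so the cardinality is compared after lifting.) -/
def KappaCCOn (κ : Cardinal.{u}) {B : Type v} [CompleteBooleanAlgebra B]
    (S : Set B) : Prop :=
  ∀ A : Set B, A ⊆ S → (∀ a ∈ A, a ≠ ⊥) →
    (A.Pairwise fun a b => a ⊓ b = ⊥) →
    Cardinal.lift.{u} (Cardinal.mk ↥A) < Cardinal.lift.{v} κ

/-- The `(κ, I, m)`-chain condition for the (sub)algebra `S` of the complete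
Boolean algebra `B`.  The index set of ordinals below `κ` is represented by the
type `κ.ord.ToType`. -/
def CCCOn (κ : Cardinal.{u}) (I : Set (Set ℕ)) (m : ℕ → ℕ)
    {B : Type v} [CompleteBooleanAlgebra B] (S : Set B) : Prop :=
  ∀ U₂ : Set κ.ord.ToType, Cardinal.mk ↥U₂ = κ →
    ∀ a : κ.ord.ToType → B, (∀ α ∈ U₂, a α ∈ S ∧ a α ≠ ⊥) →
      ∃ j : ℕ, ∃ U₁ ⊆ U₂, Cardinal.mk ↥U₁ = κ ∧ ∃ A ∈ I,
        ∀ n : ℕ, n ∉ A → ∀ u : Finset κ.ord.ToType, ↑u ⊆ U₁ →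
          ∀ i : ℕ, i + j < n →
            m n < u.card * mCirc m n ^ n ^ i → u.card ≤ m n →
            ∃ v ⊆ u, u.card ≤ v.card * mCirc m n ^ n ^ (i + j) ∧
              v.inf a ≠ ⊥

/-- `a` is below the projection of `b` (relative to the subalgebra `S₁`):
every nonzero `c ∈ S₁` with `c ≤ a` satisfies `c ⊓ b ≠ ⊥`. -/
def BelowProj {B : Type v} [CompleteBooleanAlgebra B] (S₁ : Set B) (a b : B) :
    Prop :=
  ∀ c ∈ S₁, c ≠ ⊥ → c ≤ a → c ⊓ b ≠ ⊥

/-- The pair `(S₁, S₂)` of subalgebras of `B` has the `(κ, I, m)`-pattern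
transfer property. -/
def PatternTransfer (κ : Cardinal.{u}) (I : Set (Set ℕ)) (m : ℕ → ℕ)
    {B : Type v} [CompleteBooleanAlgebra B] (S₁ S₂ : Set B) : Prop :=
  IsCompleteSubalgebra S₁ ∧ IsCompleteSubalgebra S₂ ∧ S₁ ⊆ S₂ ∧
  KappaCCOn κ S₁ ∧
  ∀ U₂ : Set κ.ord.ToType, Cardinal.mk ↥U₂ = κ →
    ∀ a2 : κ.ord.ToType → B, (∀ α ∈ U₂, a2 α ∈ S₂ ∧ a2 α ≠ ⊥) →
      (∀ α ∈ U₂, ∀ β ∈ U₂, a2 α = a2 β → α = β) →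
      ∃ j : ℕ, ∃ U₁ ⊆ U₂, Cardinal.mk ↥U₁ = κ ∧ ∃ A ∈ I,
        ∃ a1 : κ.ord.ToType → B,
          (∀ α ∈ U₁, a1 α ∈ S₁ ∧ a1 α ≠ ⊥ ∧ BelowProj S₁ (a1 α) (a2 α)) ∧
          ∀ n : ℕ, n ∉ A → ∀ i : ℕ, i + j < n →
            ∀ u : Finset κ.ord.ToType, ↑u ⊆ U₁ →
              m n < u.card * mCirc m n ^ n ^ i → u.card < m n →
              ∀ a ∈ S₁, a ≠ ⊥ → a ≤ u.inf a1 →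
                ∃ v ⊆ u, u.card ≤ v.card * mCirc m n ^ n ^ (i + j) ∧
                  v.inf a2 ⊓ a ≠ ⊥

/-- `ValidPF' κ α s f`: the finite partial function with domain `s ⊆ α` and
values given by `f` satisfies `f β < rm_κ(β)` for every `β` in the domain, where
`rm_κ(β) = β % κ.ord` is the remainder of `β` modulo `κ`. -/
def ValidPF' (κ : Cardinal.{u}) (α : Ordinal.{u}) (s : Finset Ordinal.{u})
    (f : Ordinal.{u} → Ordinal.{u}) : Prop :=
  ∀ β ∈ s, β < α ∧ f β < β % κ.ord

section Aux

open Cardinal Set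

/-- Pigeonhole: a `κ`-sized set mapped into fewer than `κ` colors has a
`κ`-sized fiber. -/
lemma pigeon_aux {κ : Cardinal.{u}} (hreg : κ.IsRegular) {T C : Type u}
    {U : Set T} (hU : κ ≤ #U) (hC : #C < κ) (f : T → C) :
    ∃ c : C, κ ≤ #({i : T | i ∈ U ∧ f i = c} : Set T) := by
  by_contra h
  push_neg at h
  have h1 : #U ≤ #(⋃ c : C, {i : T | i ∈ U ∧ f i = c}) :=
    mk_le_mk_of_subset fun i hi => Set.mem_iUnion.2 ⟨f i, hi, rfl⟩
  have h2 := h1.trans Cardinal.mk_iUnion_le_sum_mk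
  have h3 : Cardinal.sum (fun c : C => #({i : T | i ∈ U ∧ f i = c} : Set T)) < κ :=
    Cardinal.sum_lt_of_isRegular hreg hC fun c => h c
  exact (hU.trans h2).not_gt h3

/-- A finite union of sets of size `< κ` has size `< κ`. -/
lemma biUnion_lt_aux {κ : Cardinal.{u}} (hκ : Cardinal.aleph0 ≤ κ) {T : Type u} {X : Type v}
    (s : Finset X) (G : X → Set T) (hG : ∀ x ∈ s, #(G x) < κ) :
    #(⋃ x ∈ s, G x) < κ := by
  classical
  induction s using Finset.induction_on with
  | empty =>
    rw [show (⋃ x ∈ (∅ : Finset X), G x) = (∅ : Set T) by simp]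
    simpa using Cardinal.aleph0_pos.trans_le hκ
  | @insert a s' ha ih =>
    rw [Finset.set_biUnion_insert]
    exact lt_of_le_of_lt (Cardinal.mk_union_le _ _)
      (Cardinal.add_lt_of_lt hκ (hG a (Finset.mem_insert_self _ _))
        (ih fun y hy => hG y (Finset.mem_insert_of_mem hy)))

/-- The Δ-system lemma, bounded-size version. -/
lemma deltaAux {κ : Cardinal.{u}} (hreg : κ.IsRegular) {T : Type u} {X : Type v}
    [DecidableEq X] :
    ∀ (n : ℕ) (s : T → Finset X) (U : Set T), κ ≤ #U → (∀ i ∈ U, (s i).card ≤ n) →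
      ∃ U' ⊆ U, κ ≤ #U' ∧ ∃ r : Finset X, ∀ i ∈ U', ∀ j ∈ U', i ≠ j → s i ∩ s j = r := by
  intro n
  induction n with
  | zero =>
    intro s U hU hcard
    refine ⟨U, subset_rfl, hU, ∅, fun i hi j hj _ => ?_⟩
    have : s i = ∅ := Finset.card_eq_zero.mp (Nat.le_zero.mp (hcard i hi))
    simp [this]
  | succ n ih =>
    intro s U hU hcard
    classical
    by_cases hx : ∃ x : X, κ ≤ #({i : T | i ∈ U ∧ x ∈ s i} : Set T)
    · obtain ⟨x, hx⟩ := hx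
      have hU₀U : ({i : T | i ∈ U ∧ x ∈ s i} : Set T) ⊆ U := fun i hi => hi.1
      have hcard' : ∀ i ∈ ({i : T | i ∈ U ∧ x ∈ s i} : Set T), ((s i).erase x).card ≤ n := by
        intro i hi
        rw [Finset.card_erase_of_mem hi.2]
        have := hcard i (hU₀U hi)
        omega
      obtain ⟨U', hU'sub, hU'κ, r₀, hr₀⟩ := ih (fun i => (s i).erase x)
        ({i : T | i ∈ U ∧ x ∈ s i}) hx hcard'
      refine ⟨U', hU'sub.trans hU₀U, hU'κ, insert x r₀, fun i hi j hj hij => ?_⟩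
      have hxi : x ∈ s i := (hU'sub hi).2
      have hxj : x ∈ s j := (hU'sub hj).2
      have h := hr₀ i hi j hj hij
      ext a
      simp only [Finset.mem_inter, Finset.mem_insert]
      constructor
      · rintro ⟨hai, haj⟩
        by_cases hax : a = x
        · exact Or.inl hax
        · right
          rw [← h]
          simp [Finset.mem_inter, Finset.mem_erase, hax, hai, haj]
      · rintro (rfl | har)
        · exact ⟨hxi, hxj⟩
        · rw [← h] at har
          simp only [Finset.mem_inter, Finset.mem_erase] at har
          exact ⟨har.1.2, har.2.2⟩
    · push_neg at hx
      have hchaincond : ∀ c ⊆ {V : Set T | V ⊆ U ∧ ∀ i ∈ V, ∀ j ∈ V, i ≠ j → s i ∩ s j = ∅},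
          IsChain (· ⊆ ·) c → ∃ ub ∈ {V : Set T | V ⊆ U ∧
            ∀ i ∈ V, ∀ j ∈ V, i ≠ j → s i ∩ s j = ∅}, ∀ V ∈ c, V ⊆ ub := by
        intro c hc𝒮 hchain
        refine ⟨⋃₀ c, ⟨Set.sUnion_subset fun V hV => (hc𝒮 hV).1, ?_⟩,
          fun V hV => Set.subset_sUnion_of_mem hV⟩
        intro i hi j hj hne
        obtain ⟨V₁, hV₁, hiV₁⟩ := Set.mem_sUnion.mp hi
        obtain ⟨V₂, hV₂, hjV₂⟩ := Set.mem_sUnion.mp hj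
        rcases hchain.total hV₁ hV₂ with h | h
        · exact (hc𝒮 hV₂).2 i (h hiV₁) j hjV₂ hne
        · exact (hc𝒮 hV₁).2 i hiV₁ j (h hjV₂) hne
      obtain ⟨M, hMmax⟩ := zorn_subset
          {V : Set T | V ⊆ U ∧ ∀ i ∈ V, ∀ j ∈ V, i ≠ j → s i ∩ s j = ∅} hchaincond
      have hM𝒮 := hMmax.prop
      have hκM : κ ≤ #M := by
        by_contra hlt
        push_neg at hlt
        set Bad : Set T := ⋃ i : M, ⋃ x ∈ s i.1, {j : T | j ∈ U ∧ x ∈ s j} with hBadDef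
        have hBad : #Bad < κ := by
          refine lt_of_le_of_lt Cardinal.mk_iUnion_le_sum_mk
            (Cardinal.sum_lt_of_isRegular hreg hlt fun i => ?_)
          exact biUnion_lt_aux hreg.aleph0_le (s i.1) _ fun y _ => hx y
        have hUnotsub : ¬ U ⊆ M ∪ Bad := by
          intro hsub
          have h1 : #U ≤ #(M ∪ Bad : Set T) := mk_le_mk_of_subset hsub
          have h2 : #(M ∪ Bad : Set T) < κ :=
            lt_of_le_of_lt (Cardinal.mk_union_le _ _)
              (Cardinal.add_lt_of_lt hreg.aleph0_le hlt hBad)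
          exact (hU.trans h1).not_gt h2
        obtain ⟨j, hjU, hjnot⟩ := Set.not_subset.mp hUnotsub
        have hjM : j ∉ M := fun h => hjnot (Or.inl h)
        have hjBad : j ∉ Bad := fun h => hjnot (Or.inr h)
        have hins : insert j M ∈
            {V : Set T | V ⊆ U ∧ ∀ i ∈ V, ∀ j ∈ V, i ≠ j → s i ∩ s j = ∅} := by
          refine ⟨Set.insert_subset hjU hM𝒮.1, ?_⟩
          have hkey : ∀ i ∈ M, s j ∩ s i = ∅ := by
            intro i hi
            by_contra hne'
            obtain ⟨a, ha⟩ := Finset.nonempty_iff_ne_empty.mpr hne'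
            rw [Finset.mem_inter] at ha
            exact hjBad (Set.mem_iUnion.2 ⟨⟨i, hi⟩, Set.mem_iUnion₂.2 ⟨a, ha.2, hjU, ha.1⟩⟩)
          intro i₁ hi₁ i₂ hi₂ hne12
          rcases Set.mem_insert_iff.mp hi₁ with h₁ | h₁ <;>
            rcases Set.mem_insert_iff.mp hi₂ with h₂ | h₂
          · exact absurd (h₁.trans h₂.symm) hne12
          · rw [h₁]; exact hkey i₂ h₂
          · rw [h₂, Finset.inter_comm]; exact hkey i₁ h₁
          · exact hM𝒮.2 i₁ h₁ i₂ h₂ hne12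
        exact hjM (hMmax.2 hins (Set.subset_insert j M) (Set.mem_insert j M))
      exact ⟨M, hM𝒮.1, hκM, ∅, hM𝒮.2⟩

/-- The Δ-system lemma. -/
lemma deltaSystem {κ : Cardinal.{u}} (hreg : κ.IsRegular)
    (hunc : Cardinal.aleph0 < κ) {T : Type u} {X : Type v} [DecidableEq X]
    (s : T → Finset X) (U : Set T) (hU : κ ≤ #U) :
    ∃ U' ⊆ U, κ ≤ #U' ∧ ∃ r : Finset X, ∀ i ∈ U', ∀ j ∈ U', i ≠ j → s i ∩ s j = r := by
  have hN : #(ULift.{u} ℕ) < κ := by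
    rw [Cardinal.mk_uLift, Cardinal.mk_nat, Cardinal.lift_aleph0]; exact hunc
  obtain ⟨c, hc⟩ := pigeon_aux hreg hU hN (fun i => ULift.up (s i).card)
  obtain ⟨U', h1, h2, r, hr⟩ := deltaAux hreg c.down s _ hc
    (fun i hi => le_of_eq (congrArg ULift.down hi.2))
  exact ⟨U', h1.trans (fun i hi => hi.1), h2, r, hr⟩

/-- Stabilizing the values of the partial functions on a fixed finite set. -/
lemma stabilize_aux {κ : Cardinal.{u}} (hreg : κ.IsRegular) {T : Type u}
    (r : Finset Ordinal.{u}) (F : T → Ordinal.{u} → Ordinal.{u}) (U : Set T)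
    (hU : κ ≤ #U) (hval : ∀ i ∈ U, ∀ β ∈ r, F i β < β % κ.ord) :
    ∃ U' ⊆ U, κ ≤ #U' ∧ ∃ g : Ordinal.{u} → Ordinal.{u},
      ∀ i ∈ U', ∀ β ∈ r, F i β = g β := by
  classical
  revert hval
  induction r using Finset.induction_on with
  | empty =>
    exact fun _ => ⟨U, subset_rfl, hU, fun _ => 0,
      fun i _ β hβ => absurd hβ (Finset.notMem_empty β)⟩
  | @insert β₀ r' hβ₀ ih =>
    intro hval
    obtain ⟨U₁, hU₁sub, hU₁κ, g₁, hg₁⟩ :=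
      ih (fun i hi β hβ => hval i hi β (Finset.mem_insert_of_mem hβ))
    have hU₁ne : U₁.Nonempty := by
      rw [← Set.nonempty_coe_sort, ← Cardinal.mk_ne_zero_iff]
      intro h0
      rw [h0] at hU₁κ
      exact hreg.pos.not_ge hU₁κ
    obtain ⟨i₀, hi₀⟩ := hU₁ne
    have hO0 : β₀ % κ.ord ≠ 0 := by
      intro h
      have h2 := hval i₀ (hU₁sub hi₀) β₀ (Finset.mem_insert_self _ _)
      rw [h] at h2
      exact not_lt_zero h2
    have hNE : Nonempty (β₀ % κ.ord).ToType := Ordinal.nonempty_toType_iff.2 hO0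
    have hord0 : κ.ord ≠ 0 := fun h => hreg.pos.ne' (Cardinal.ord_eq_zero.mp h)
    have hCκ : #(β₀ % κ.ord).ToType < κ := by
      rw [Cardinal.mk_toType]
      exact Cardinal.lt_ord.mp (Ordinal.mod_lt β₀ hord0)
    set φ : T → (β₀ % κ.ord).ToType := fun i =>
      if h : F i β₀ < β₀ % κ.ord then Ordinal.ToType.mk (o := β₀ % κ.ord) ⟨F i β₀, h⟩
      else Classical.choice hNE with hφdef
    obtain ⟨c, hc⟩ := pigeon_aux hreg hU₁κ hCκ φ
    refine ⟨{i | i ∈ U₁ ∧ φ i = c}, fun i hi => hU₁sub hi.1, hc,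
      Function.update g₁ β₀ ((Ordinal.ToType.mk (o := β₀ % κ.ord)).symm c).1, ?_⟩
    intro i hi β hβ
    rcases Finset.mem_insert.mp hβ with hββ | hβ'
    · have hlt : F i β₀ < β₀ % κ.ord := hval i (hU₁sub hi.1) β₀ (Finset.mem_insert_self _ _)
      have hφ : φ i = c := hi.2
      simp only [hφdef] at hφ
      rw [dif_pos hlt] at hφ
      rw [hββ, Function.update_self, ← hφ]
      simp
    · have hne : β ≠ β₀ := fun h => hβ₀ (h ▸ hβ')
      rw [Function.update_of_ne hne]
      exact hg₁ i hi.1 β hβ'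

end Aux

section Centered

open Cardinal Set

/-- The key lemma: from any `κ`-sized family of nonzero elements one can
extract a `κ`-sized centered subfamily. -/
lemma centered_subfamily (κ : Cardinal.{u}) (hreg : κ.IsRegular)
    (hunc : Cardinal.aleph0 < κ) (α : Ordinal.{u}) {B : Type u}
    [CompleteBooleanAlgebra B]
    (x : Finset Ordinal.{u} → (Ordinal.{u} → Ordinal.{u}) → B)
    (hne : ∀ s f, ValidPF' κ α s f → x s f ≠ ⊥)
    (hmono : ∀ s f s' f', ValidPF' κ α s f → ValidPF' κ α s' f' → s' ⊆ s →
      (∀ β ∈ s', f' β = f β) → x s f ≤ x s' f')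
    (hdense : ∀ b : B, b ≠ ⊥ → ∃ s f, ValidPF' κ α s f ∧ x s f ≤ b)
    (U₂ : Set κ.ord.ToType) (hU₂ : κ ≤ #U₂)
    (a : κ.ord.ToType → B) (ha : ∀ t ∈ U₂, a t ≠ ⊥) :
    ∃ U₁ ⊆ U₂, κ ≤ #U₁ ∧ ∀ u : Finset κ.ord.ToType, ↑u ⊆ U₁ → u.inf a ≠ ⊥ := by
  classical
  choose! S F hSF using fun t (ht : t ∈ U₂) => hdense (a t) (ha t ht)
  obtain ⟨U₃, hU₃sub, hU₃κ, r, hΔ⟩ := deltaSystem hreg hunc S U₂ hU₂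
  have hU₃inf : U₃.Infinite := by
    rw [← Set.infinite_coe_iff]
    exact Cardinal.infinite_iff.mpr (hreg.aleph0_le.trans hU₃κ)
  have hrsub : ∀ i ∈ U₃, r ⊆ S i := by
    intro i hi
    obtain ⟨j, hj⟩ := (hU₃inf.diff (Set.finite_singleton i)).nonempty
    have hji : j ≠ i := hj.2
    rw [← hΔ i hi j hj.1 hji.symm]
    exact Finset.inter_subset_left
  obtain ⟨U₁, hU₁sub, hU₁κ, g, hg⟩ := stabilize_aux hreg r F U₃ hU₃κ
    (fun i hi β hβ => ((hSF i (hU₃sub hi)).1 β (hrsub i hi hβ)).2)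
  refine ⟨U₁, hU₁sub.trans hU₃sub, hU₁κ, ?_⟩
  intro u hu
  have huU₁ : ∀ t ∈ u, t ∈ U₁ := fun t ht => hu ht
  have huU₃ : ∀ t ∈ u, t ∈ U₃ := fun t ht => hU₁sub (huU₁ t ht)
  have huU₂ : ∀ t ∈ u, t ∈ U₂ := fun t ht => hU₃sub (huU₃ t ht)
  set fU : Ordinal.{u} → Ordinal.{u} := fun β =>
    if h : ∃ t, t ∈ u ∧ β ∈ S t then F h.choose β else 0 with hfU
  have key : ∀ t ∈ u, ∀ β ∈ S t, fU β = F t β := by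
    intro t ht β hβ
    have hPβ : ∃ t', t' ∈ u ∧ β ∈ S t' := ⟨t, ht, hβ⟩
    rw [hfU]
    simp only [dif_pos hPβ]
    obtain ⟨ht', hβ'⟩ := hPβ.choose_spec
    by_cases he : hPβ.choose = t
    · rw [he]
    · have hβr : β ∈ r := by
        rw [← hΔ hPβ.choose (huU₃ _ ht') t (huU₃ t ht) he]
        exact Finset.mem_inter.mpr ⟨hβ', hβ⟩
      rw [hg _ (huU₁ _ ht') β hβr, hg t (huU₁ t ht) β hβr]
  have hvalU : ValidPF' κ α (u.biUnion S) fU := by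
    intro β hβ
    obtain ⟨t, ht, hβt⟩ := Finset.mem_biUnion.mp hβ
    have h := (hSF t (huU₂ t ht)).1 β hβt
    rw [key t ht β hβt]
    exact h
  have hxne : x (u.biUnion S) fU ≠ ⊥ := hne _ _ hvalU
  have hxle : x (u.biUnion S) fU ≤ u.inf a := by
    refine Finset.le_inf fun t ht => ?_
    exact le_trans (hmono (u.biUnion S) fU (S t) (F t) hvalU ((hSF t (huU₂ t ht)).1)
      (Finset.subset_biUnion_of_mem S ht) (fun β hβ => (key t ht β hβ).symm))
      ((hSF t (huU₂ t ht)).2)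
  intro hbot
  exact hxne (le_bot_iff.mp (hbot ▸ hxle))

end Centered

lemma fastSeq_pos {m : ℕ → ℕ} (hm : FastSeq m) : ∀ j, 0 < m j := by
  intro j
  induction j using Nat.strong_induction_on with
  | _ j ih =>
    have hc : 0 < mCirc m j := Finset.prod_pos fun k hk => ih k (Finset.mem_range.mp hk)
    have h1 : 1 ≤ (mCirc m j ^ j ^ j) ^ (4 * mCirc m j ^ j ^ j) :=
      Nat.one_le_pow _ _ (pow_pos hc _)
    exact h1.trans (hm.2 j)

/-- (Claim 8.8.)  Let `κ` be regular uncountable and `α` an ordinal.  If the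
complete Boolean algebra `B` contains a family `x s f` of nonzero elements
indexed by the finite partial functions `f` on `α` with `f β < rm_κ(β)`
(monotone, pairwise disjoint when incompatible, and dense in `B`), then `B`
satisfies the `κ`-c.c., and indeed the `(κ, I, m)`-c.c. for every ideal `I`
on `ℕ` and every fast sequence `m`. -/
theorem boolean_algebra_lt_kappa_ccc (κ : Cardinal.{u})
    (hreg : κ.IsRegular) (hunc : Cardinal.aleph0 < κ) (α : Ordinal.{u})
    {B : Type u} [CompleteBooleanAlgebra B]
    (x : Finset Ordinal.{u} → (Ordinal.{u} → Ordinal.{u}) → B)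
    (hne : ∀ s f, ValidPF' κ α s f → x s f ≠ ⊥)
    (hmono : ∀ s f s' f', ValidPF' κ α s f → ValidPF' κ α s' f' → s' ⊆ s →
      (∀ β ∈ s', f' β = f β) → x s f ≤ x s' f')
    (hdisj : ∀ s f s' f', ValidPF' κ α s f → ValidPF' κ α s' f' →
      (∃ β ∈ s ∩ s', f β ≠ f' β) → x s f ⊓ x s' f' = ⊥)
    (hdense : ∀ b : B, b ≠ ⊥ → ∃ s f, ValidPF' κ α s f ∧ x s f ≤ b) :
    KappaCCOn κ (Set.univ : Set B) ∧
    ∀ I : Set (Set ℕ), IsIdealOnNat I → ∀ m : ℕ → ℕ, FastSeq m →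
      CCCOn κ I m (Set.univ : Set B) := by
  classical
  have hmkT : Cardinal.mk κ.ord.ToType = κ := by
    rw [Cardinal.mk_toType, Cardinal.card_ord]
  constructor
  · intro A _ h0 hpair
    rw [Cardinal.lift_lt]
    by_contra hge
    push_neg at hge
    rw [← hmkT] at hge
    obtain ⟨e⟩ := (Cardinal.le_def _ _).mp hge
    obtain ⟨U₁, -, hU₁κ, hcent⟩ := centered_subfamily κ hreg hunc α x hne hmono hdense
      Set.univ (Cardinal.mk_univ.trans hmkT).ge (fun t => (e t : B))
      (fun t _ => h0 _ (e t).2)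
    have hinf : U₁.Infinite := by
      rw [← Set.infinite_coe_iff]
      exact Cardinal.infinite_iff.mpr (hreg.aleph0_le.trans hU₁κ)
    obtain ⟨t₁, ht₁⟩ := hinf.nonempty
    obtain ⟨t₂, ht₂⟩ := (hinf.diff (Set.finite_singleton t₁)).nonempty
    have hne12 : t₂ ≠ t₁ := ht₂.2
    have h2 := hcent {t₁, t₂} ?_
    · rw [Finset.inf_insert, Finset.inf_singleton] at h2
      have hval_ne : (e t₁ : B) ≠ (e t₂ : B) :=
        fun h => hne12 (e.injective (Subtype.ext h)).symm
      exact h2 (hpair (e t₁).2 (e t₂).2 hval_ne)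
    · intro t ht
      simp only [Finset.coe_insert, Finset.coe_singleton, Set.mem_insert_iff,
        Set.mem_singleton_iff] at ht
      rcases ht with rfl | rfl
      · exact ht₁
      · exact ht₂.1
  · intro I hI m hm U₂ hU₂ a ha
    obtain ⟨U₁, hsub, hκ, hcent⟩ := centered_subfamily κ hreg hunc α x hne hmono hdense
      U₂ hU₂.ge a (fun t ht => (ha t ht).2)
    refine ⟨0, U₁, hsub, le_antisymm ((Cardinal.mk_le_mk_of_subset hsub).trans hU₂.le) hκ,
      ∅, hI.1 ∅ Set.finite_empty, ?_⟩
    intro n _ u hu i _ _ _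
    refine ⟨u, Finset.Subset.refl u, ?_, hcent u hu⟩
    have hpow : 0 < mCirc m n ^ n ^ (i + 0) :=
      pow_pos (Finset.prod_pos fun k _ => fastSeq_pos hm k) _
    exact Nat.le_mul_of_pos_right _ hpow
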